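/- Let |R_i| = Σ_{t=1}^{n} Y_t where Y_t are independent Bernoulli variables with P(Y_t = 1) = (1/s)·min(1, s/t). Then for c ≥ 4, P(|R_i| ≥ 1 + c·log₂ n) ≤ n^{−c}. -/

import Mathlib

open MeasureTheory ProbabilityTheory Finset Real

lemma key_ineq (c L l2 : ℝ) (hl2 : l2 = Real.log 2) (hc : 4 ≤ c)
    (hL : 4 * l2 ≤ L) :
    -Real.log c * (1 + c * (L / l2)) + (c - 1) * (1 + L) ≤ -(c * L) := by
  have hl2pos : 0 < l2 := hl2 ▸ Real.log_pos (by norm_num)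
  have hl2b : 0.6931471803 < l2 := hl2 ▸ Real.log_two_gt_d9
  have hc0 : (0:ℝ) < c := by linarith
  have h4 : Real.log 4 = 2 * l2 := by
    rw [hl2, show (4:ℝ) = 2^2 by norm_num, Real.log_pow]; push_cast; ring
  set D := Real.log c - 2 * l2 with hDdef
  have hD : 0 ≤ D := by
    have : Real.log 4 ≤ Real.log c := Real.log_le_log (by norm_num) hc
    rw [h4] at this; simp only [hDdef]; linarith
  have hE : Real.exp D = c / 4 := by
    rw [hDdef, Real.exp_sub, Real.exp_log hc0, ← h4, Real.exp_log (by norm_num)]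
  have h1 : (1 - D) * (c / 4) ≤ 1 := by
    have h := Real.add_one_le_exp (-D)
    have h2 := mul_le_mul_of_nonneg_right h (Real.exp_pos D).le
    rw [← Real.exp_add, neg_add_cancel, Real.exp_zero, hE] at h2
    linarith
  have hlog : Real.log c = D + 2 * l2 := by rw [hDdef]; ring
  have hQ : L / l2 * l2 = L := div_mul_cancel₀ _ hl2pos.ne'
  rw [hlog]
  have hDc : 0 ≤ D * c := mul_nonneg hD hc0.le
  have hprod : 0 ≤ (L - 4 * l2) * (D * c + l2) :=
    mul_nonneg (by linarith) (by linarith)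
  set Q := L / l2 with hQdef
  have main : (-(D + 2*l2) * (1 + c * Q) + (c - 1) * (1 + L)) * l2 ≤ (-(c * L)) * l2 := by
    have hexp : (-(D + 2*l2) * (1 + c * Q) + (c - 1) * (1 + L)) * l2
        = -(D + 2*l2) * (l2 + c * (Q * l2)) + (c - 1) * (1 + L) * l2 := by ring
    rw [hexp, hQ]
    nlinarith [h1, hprod, hDc, mul_pos hl2pos hl2pos, mul_nonneg hDc hl2pos.le,
      mul_nonneg hD hl2pos.le]
  exact le_of_mul_le_mul_right main hl2pos

/-- For `2 ≤ n` with `2^(n-1) < n^4`, we have `n < 1 + c·log₂ n` for every `c ≥ 4`. -/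
lemma small_n_lt (n : ℕ) (hn2 : 2 ≤ n) (hpow : 2 ^ (n - 1) < n ^ 4)
    (c : ℝ) (hc : 4 ≤ c) : (n : ℝ) < 1 + c * Real.logb 2 n := by
  have hl2pos : 0 < Real.log 2 := Real.log_pos (by norm_num)
  have hn1 : (1:ℝ) < (n:ℝ) := by exact_mod_cast hn2.trans_lt' (by norm_num)
  have hlogb : 0 < Real.logb 2 n := Real.logb_pos (by norm_num) hn1
  have hcast : ((2:ℝ)) ^ (n - 1) < ((n:ℝ)) ^ 4 := by exact_mod_cast hpow
  have hlog : ((n:ℕ) - 1 : ℕ) * Real.log 2 < 4 * Real.log n := by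
    have := Real.log_lt_log (by positivity) hcast
    rwa [Real.log_pow, Real.log_pow] at this
  have hcast1 : ((n - 1 : ℕ) : ℝ) = (n:ℝ) - 1 := by
    have : 1 ≤ n := by omega
    push_cast [Nat.cast_sub this]; ring
  rw [hcast1] at hlog
  have h4 : (n:ℝ) - 1 < 4 * Real.logb 2 n := by
    rw [Real.logb, mul_div_assoc', lt_div_iff₀ hl2pos]
    exact hlog
  have : 4 * Real.logb 2 n ≤ c * Real.logb 2 n :=
    mul_le_mul_of_nonneg_right hc hlogb.le
  linarith

theorem slot_size_tail_bound {Ω : Type*} [MeasurableSpace Ω]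
    (μ : Measure Ω) [IsProbabilityMeasure μ] (n s : ℕ) (hs : 1 ≤ s) (hsn : s ≤ n)
    (c : ℝ) (hc : 4 ≤ c)
    (Y : ℕ → Ω → ℝ)
    (hmeas : ∀ t, Measurable (Y t))
    (hindep : ProbabilityTheory.iIndepFun Y μ)
    (hBer : ∀ t ∈ Finset.Icc 1 n, ∀ ω, Y t ω = 0 ∨ Y t ω = 1)
    (hprob : ∀ t ∈ Finset.Icc 1 n,
      μ {ω | Y t ω = 1} = ENNReal.ofReal ((1 / (s : ℝ)) * min 1 ((s : ℝ) / t))) :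
    μ {ω | 1 + c * Real.logb 2 n ≤ ∑ t ∈ Finset.Icc 1 n, Y t ω}
      ≤ ENNReal.ofReal ((n : ℝ) ^ (-c)) := by
  have hn1 : 1 ≤ n := hs.trans hsn
  -- case n = 1
  rcases eq_or_lt_of_le hn1 with h1 | hn2
  · rw [← h1]
    have : ((1:ℕ):ℝ) ^ (-c) = 1 := by norm_num
    rw [this, ENNReal.ofReal_one]
    exact prob_le_one
  -- sum is bounded by n pointwise
  have hXle : ∀ ω, (∑ t ∈ Finset.Icc 1 n, Y t ω) ≤ (n:ℝ) := by
    intro ω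
    calc ∑ t ∈ Finset.Icc 1 n, Y t ω ≤ ∑ t ∈ Finset.Icc 1 n, 1 :=
          Finset.sum_le_sum (fun t ht => by rcases hBer t ht ω with h | h <;> simp [h])
      _ = (n : ℝ) := by simp [Nat.card_Icc]
  by_cases hbig : (n:ℝ) < 1 + c * Real.logb 2 n
  · -- event is empty
    have hempty : {ω | 1 + c * Real.logb 2 n ≤ ∑ t ∈ Finset.Icc 1 n, Y t ω} = ∅ := by
      ext ω
      simp only [Set.mem_setOf_eq, Set.mem_empty_iff_false, iff_false, not_le]
      exact lt_of_le_of_lt (hXle ω) hbig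
    rw [hempty]
    simp
  push_neg at hbig
  -- n ≥ 16
  have hn16 : 16 ≤ n := by
    by_contra hlt
    push_neg at hlt
    have : (n:ℝ) < 1 + c * Real.logb 2 n := by
      apply small_n_lt n hn2 _ c hc
      interval_cases n <;> norm_num
    linarith
  have hl2pos : 0 < Real.log 2 := Real.log_pos (by norm_num)
  have hnpos : (0:ℝ) < n := by positivity
  have hL : 4 * Real.log 2 ≤ Real.log n := by
    have : Real.log 16 ≤ Real.log n := Real.log_le_log (by norm_num) (by exact_mod_cast hn16)
    rw [show (16:ℝ) = 2^4 by norm_num, Real.log_pow] at this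
    push_cast at this; linarith
  set l := Real.log c with hldef
  have hc0 : (0:ℝ) < c := by linarith
  have hl0 : 0 ≤ l := Real.log_nonneg (by linarith)
  have hec : Real.exp l = c := Real.exp_log hc0
  -- probability parameters
  set p : ℕ → ℝ := fun t => (1 / (s : ℝ)) * min 1 ((s : ℝ) / t) with hpdef
  have hp_nonneg : ∀ t, 1 ≤ t → 0 ≤ p t := by
    intro t ht
    have : (0:ℝ) < s := by exact_mod_cast hs
    have : (0:ℝ) ≤ (s:ℝ)/t := by positivity
    simp only [hpdef]
    have : (0:ℝ) ≤ min 1 ((s:ℝ)/t) := le_min (by norm_num) this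
    positivity
  -- mgf of each Y t
  have hmgf_t : ∀ t ∈ Finset.Icc 1 n, mgf (Y t) μ l = 1 + (c - 1) * p t := by
    intro t ht
    have hA : MeasurableSet {ω | Y t ω = 1} := hmeas t (measurableSet_singleton 1)
    have hfun : (fun ω => Real.exp (l * Y t ω))
        = fun ω => 1 + (c - 1) * Set.indicator {ω | Y t ω = 1} (fun _ => (1:ℝ)) ω := by
      funext ω
      rcases hBer t ht ω with h | h
      · have hω : ω ∉ {ω | Y t ω = 1} := by simp [Set.mem_setOf_eq, h]
        simp [h, Set.indicator_of_notMem hω]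
      · have hω : ω ∈ {ω | Y t ω = 1} := by simp [Set.mem_setOf_eq, h]
        simp [h, Set.indicator_of_mem hω, hec]
    rw [mgf, hfun]
    have hind : Integrable (Set.indicator {ω | Y t ω = 1} (fun _ => (1:ℝ))) μ :=
      (integrable_const (1:ℝ)).indicator hA
    rw [integral_add (integrable_const 1) (hind.const_mul _), integral_const,
      integral_const_mul, integral_indicator_const _ hA, measureReal_def, measureReal_def, hprob t ht,
      ENNReal.toReal_ofReal (hp_nonneg t (Finset.mem_Icc.mp ht).1)]
    simp
  -- sum of p is at most 1 + log n
  have hPsum : ∑ t ∈ Finset.Icc 1 n, p t ≤ 1 + Real.log n := by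
    have h1 : ∑ t ∈ Finset.Icc 1 n, p t ≤ ∑ t ∈ Finset.Icc 1 n, ((t:ℝ))⁻¹ := by
      apply Finset.sum_le_sum
      intro t ht
      obtain ⟨ht1, -⟩ := Finset.mem_Icc.mp ht
      have hs0 : (0:ℝ) < s := by exact_mod_cast hs
      have ht0 : (0:ℝ) < t := by exact_mod_cast ht1
      have : (1 / (s:ℝ)) * min 1 ((s:ℝ)/t) ≤ (1/(s:ℝ)) * ((s:ℝ)/t) :=
        mul_le_mul_of_nonneg_left (min_le_right _ _) (by positivity)
      calc p t ≤ (1/(s:ℝ)) * ((s:ℝ)/t) := this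
        _ = ((t:ℝ))⁻¹ := by field_simp
    have h2 : ∑ t ∈ Finset.Icc 1 n, ((t:ℝ))⁻¹ = (harmonic n : ℝ) := by
      rw [harmonic_eq_sum_Icc]
      push_cast
      rfl
    calc ∑ t ∈ Finset.Icc 1 n, p t ≤ (harmonic n : ℝ) := h1.trans_eq h2
      _ ≤ 1 + Real.log n := harmonic_le_one_add_log n
  -- integrability of exp (l * S)
  have hSmeas : Measurable (∑ t ∈ Finset.Icc 1 n, Y t) := by
    have heq : (∑ t ∈ Finset.Icc 1 n, Y t) = fun ω => ∑ t ∈ Finset.Icc 1 n, Y t ω :=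
      funext fun ω => Finset.sum_apply ω _ _
    rw [heq]
    exact Finset.measurable_sum _ fun i _ => hmeas i
  have hint : Integrable (fun ω => Real.exp (l * (∑ t ∈ Finset.Icc 1 n, Y t) ω)) μ := by
    apply Integrable.mono' (integrable_const (Real.exp (l * n)))
    · exact (measurable_exp.comp (hSmeas.const_mul l)).aestronglyMeasurable
    · filter_upwards with ω
      rw [Real.norm_eq_abs, abs_of_pos (Real.exp_pos _), Real.exp_le_exp]
      have := hXle ω
      rw [Finset.sum_apply]
      exact mul_le_mul_of_nonneg_left (by simpa using hXle ω) hl0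
  -- Chernoff
  have hcher := measure_ge_le_exp_mul_mgf (μ := μ) (X := ∑ t ∈ Finset.Icc 1 n, Y t)
    (1 + c * Real.logb 2 n) hl0 hint
  have hmgfS : mgf (∑ t ∈ Finset.Icc 1 n, Y t) μ l ≤ Real.exp ((c-1) * (1 + Real.log n)) := by
    rw [hindep.mgf_sum hmeas]
    calc ∏ t ∈ Finset.Icc 1 n, mgf (Y t) μ l
        ≤ ∏ t ∈ Finset.Icc 1 n, Real.exp ((c-1) * p t) := by
          apply Finset.prod_le_prod
          · intro t ht
            rw [hmgf_t t ht]
            have := hp_nonneg t (Finset.mem_Icc.mp ht).1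
            nlinarith
          · intro t ht
            rw [hmgf_t t ht]
            linarith [Real.add_one_le_exp ((c-1) * p t)]
      _ = Real.exp (∑ t ∈ Finset.Icc 1 n, (c-1) * p t) := (Real.exp_sum _ _).symm
      _ ≤ Real.exp ((c-1) * (1 + Real.log n)) := by
          rw [Real.exp_le_exp, ← Finset.mul_sum]
          exact mul_le_mul_of_nonneg_left hPsum (by linarith)
  have hfinal : (μ {ω | 1 + c * Real.logb 2 n ≤ (∑ t ∈ Finset.Icc 1 n, Y t) ω}).toReal
      ≤ (n:ℝ) ^ (-c) := by
    calc (μ {ω | 1 + c * Real.logb 2 n ≤ (∑ t ∈ Finset.Icc 1 n, Y t) ω}).toReal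
        ≤ Real.exp (-l * (1 + c * Real.logb 2 n)) * mgf (∑ t ∈ Finset.Icc 1 n, Y t) μ l :=
          hcher
      _ ≤ Real.exp (-l * (1 + c * Real.logb 2 n)) * Real.exp ((c-1) * (1 + Real.log n)) :=
          mul_le_mul_of_nonneg_left hmgfS (Real.exp_pos _).le
      _ = Real.exp (-l * (1 + c * Real.logb 2 n) + (c-1) * (1 + Real.log n)) :=
          (Real.exp_add _ _).symm
      _ ≤ Real.exp (-(c * Real.log n)) := by
          rw [Real.exp_le_exp]
          have hk := key_ineq c (Real.log n) (Real.log 2) rfl hc hL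
          rw [Real.logb]
          calc -l * (1 + c * (Real.log n / Real.log 2)) + (c-1) * (1 + Real.log n)
              = -Real.log c * (1 + c * (Real.log n / Real.log 2))
                + (c - 1) * (1 + Real.log n) := by rw [hldef]
            _ ≤ -(c * Real.log n) := hk
      _ = (n:ℝ) ^ (-c) := by
          rw [Real.rpow_def_of_pos hnpos]; ring_nf
  have hEs : {ω | 1 + c * Real.logb 2 n ≤ ∑ t ∈ Finset.Icc 1 n, Y t ω}
      = {ω | 1 + c * Real.logb 2 n ≤ (∑ t ∈ Finset.Icc 1 n, Y t) ω} := by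
    simp [Finset.sum_apply]
  rw [hEs, ← ENNReal.ofReal_toReal (measure_ne_top μ _)]
  exact ENNReal.ofReal_le_ofReal hfinal
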